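/- For every integer σ ≥ 2, the dihedral group D_{σ−1} = ⟨x, y | x^{σ−1}, y², yxyx⟩ of order 2(σ − 1) admits a (1; 2, 2)-generating vector, namely (x, e, y, y); consequently (1; 2, 2) is an actual signature for every genus σ ≥ 2. -/

import Mathlib

/-- The Riemann–Hurwitz formula `σ - 1 = N (h - 1 + (1/2) Σ (1 - 1/mᵢ))`
as an equality of rational numbers. -/
def RHFormula (σ N h : ℕ) (m : List ℕ) : Prop :=
  (σ : ℚ) - 1 = (N : ℚ) * ((h : ℚ) - 1 + (1 / 2) * (m.map (fun x => 1 - 1 / (x : ℚ))).sum)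

/-- `(h; m₁, …, m_r)` is a potential signature for genus `σ`: each `mᵢ ≥ 2` and there is
a positive integer `N` with `mᵢ ∣ N` for all `i` satisfying the Riemann–Hurwitz formula. -/
def IsPotentialSignature (σ h : ℕ) (m : List ℕ) : Prop :=
  (∀ x ∈ m, 2 ≤ x) ∧ ∃ N : ℕ, 0 < N ∧ (∀ x ∈ m, x ∣ N) ∧ RHFormula σ N h m

/-- The set `P_σ` of potential signatures for genus `σ`, as a set of pairs `(h, [m₁, …, m_r])`. -/
def PotSig (σ : ℕ) : Set (ℕ × List ℕ) := {p | IsPotentialSignature σ p.1 p.2}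
open scoped commutatorElement
/-- `(a, b, c)` is an `(h; m₁, …, m_r)`-generating vector for the group `G`:
the elements generate `G`, the order of `cᵢ` is `mᵢ`, and
`∏ ⁅aᵢ, bᵢ⁆ · ∏ cⱼ = 1`. -/
def IsGenVector (G : Type*) [Group G] (h : ℕ) (m : List ℕ)
    (a b : Fin h → G) (c : Fin m.length → G) : Prop :=
  Subgroup.closure (Set.range a ∪ Set.range b ∪ Set.range c) = ⊤ ∧
  (∀ i : Fin m.length, orderOf (c i) = m.get i) ∧
  (List.ofFn fun i => ⁅a i, b i⁆).prod * (List.ofFn c).prod = 1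

/-- `G` admits an `(h; m₁, …, m_r)`-generating vector. -/
def HasGenVector (G : Type*) [Group G] (h : ℕ) (m : List ℕ) : Prop :=
  ∃ (a b : Fin h → G) (c : Fin m.length → G), IsGenVector G h m a b c

/-- `(h; m₁, …, m_r)` (with all `mᵢ ≥ 2`) is an actual signature for genus `σ`: some finite
group `G` admits an `(h; m₁, …, m_r)`-generating vector and `N = |G|` satisfies the
Riemann–Hurwitz formula for genus `σ`. -/
def IsActualSignature (σ h : ℕ) (m : List ℕ) : Prop :=
  (∀ x ∈ m, 2 ≤ x) ∧
  ∃ (G : Type) (_ : Group G) (_ : Fintype G),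
    HasGenVector G h m ∧ RHFormula σ (Fintype.card G) h m

open DihedralGroup in
lemma gen_dihedral' (n : ℕ) [NeZero n] :
    Subgroup.closure ({r 1, sr 0} : Set (DihedralGroup n)) = ⊤ := by
  rw [eq_top_iff]
  intro g _
  have hr : ∀ k : ZMod n, r k ∈ Subgroup.closure ({r 1, sr 0} : Set (DihedralGroup n)) := by
    intro k
    have : r k = (r 1 : DihedralGroup n) ^ k.val := by
      rw [r_one_pow, ZMod.natCast_val, ZMod.cast_id]
    rw [this]
    exact pow_mem (Subgroup.subset_closure (by simp)) _
  cases g with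
  | r k => exact hr k
  | sr k =>
    have : (sr k : DihedralGroup n) = sr 0 * r k := by simp [sr_mul_r]
    rw [this]
    exact mul_mem (Subgroup.subset_closure (by simp)) (hr k)

/-- For every `σ ≥ 2`, the dihedral group of order `2(σ - 1)` admits a
`(1; 2, 2)`-generating vector, namely `(x, e, y, y)`; consequently `(1; 2, 2)` is an
actual signature for every genus `σ ≥ 2`. -/
theorem dihedral_genVector_one_two_two (σ : ℕ) (hσ : 2 ≤ σ) :
    Nat.card (DihedralGroup (σ - 1)) = 2 * (σ - 1) ∧
    IsGenVector (DihedralGroup (σ - 1)) 1 [2, 2]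
      ![DihedralGroup.r 1] ![1] ![DihedralGroup.sr 0, DihedralGroup.sr 0] ∧
    IsActualSignature σ 1 [2, 2] := by

  have hn : 1 ≤ σ - 1 := by omega
  haveI : NeZero (σ - 1) := ⟨by omega⟩
  have hcard : Nat.card (DihedralGroup (σ - 1)) = 2 * (σ - 1) := DihedralGroup.nat_card
  have hgen : IsGenVector (DihedralGroup (σ - 1)) 1 [2, 2]
      ![DihedralGroup.r 1] ![1] ![DihedralGroup.sr 0, DihedralGroup.sr 0] := by
    refine ⟨?_, ?_, ?_⟩
    · rw [eq_top_iff, ← gen_dihedral' (σ - 1)]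
      apply Subgroup.closure_mono
      intro x hx
      rcases hx with rfl | rfl
      · exact Or.inl (Or.inl ⟨0, rfl⟩)
      · exact Or.inr ⟨⟨0, by norm_num⟩, by simp⟩
    · intro i
      fin_cases i <;> simp [DihedralGroup.orderOf_sr]
    · simp only [List.ofFn]
      show ⁅DihedralGroup.r 1, (1 : DihedralGroup (σ-1))⁆ * 1 *
        (DihedralGroup.sr 0 * (DihedralGroup.sr 0 * 1)) = 1
      simp [commutatorElement_def, DihedralGroup.sr_mul_sr, ← DihedralGroup.one_def]
  have hRH : RHFormula σ (2 * (σ - 1)) 1 [2, 2] := by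
    unfold RHFormula
    have : ((σ - 1 : ℕ) : ℚ) = (σ : ℚ) - 1 := by
      have h1 : (1 : ℕ) ≤ σ := by omega
      push_cast [h1]
      ring
    push_cast [this]
    norm_num
    ring
  refine ⟨hcard, hgen, ?_⟩
  refine ⟨by norm_num, DihedralGroup (σ - 1), inferInstance, inferInstance,
    ⟨_, _, _, hgen⟩, ?_⟩
  rwa [DihedralGroup.card]
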